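/- If f, g are rearranged integrable functions on a ball with f ≺ g, then ‖f‖_{L^p} ≤ ‖g‖_{L^p} for every p ∈ [1,∞]. -/

import Mathlib

open MeasureTheory Set Metric ENNReal

lemma layercake_pt {q s : ℝ} (hq : 1 < q) (hs : 0 ≤ s) :
    ENNReal.ofReal (q*(q-1)) *
      ∫⁻ t in Ioi (0:ℝ), ENNReal.ofReal (s - t) * ENNReal.ofReal t ^ (q - 2) =
    ENNReal.ofReal (s ^ q) := by
  have hq0 : (0:ℝ) < q := by linarith
  have hq1 : (0:ℝ) < q - 1 := by linarith
  rcases eq_or_lt_of_le hs with h | hs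
  · have hz : ∀ t ∈ Ioi (0:ℝ), ENNReal.ofReal (s - t) * ENNReal.ofReal t ^ (q - 2) = 0 := by
      intro t ht
      have h1 : s - t < 0 := by simp only [mem_Ioi] at ht; linarith [h.symm]
      simp [ENNReal.ofReal_eq_zero.2 h1.le]
    rw [setLIntegral_congr_fun_ae measurableSet_Ioi (ae_of_all _ hz)]
    simp [← h, Real.zero_rpow hq0.ne']
  · have hsplit : (Ioi (0:ℝ)) = Ioc 0 s ∪ Ioi s := by
      rw [Set.Ioc_union_Ioi_eq_Ioi hs.le]
    rw [hsplit, lintegral_union measurableSet_Ioi (Set.Ioc_disjoint_Ioi le_rfl)]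
    have h2 : ∫⁻ t in Ioi s, ENNReal.ofReal (s - t) * ENNReal.ofReal t ^ (q - 2) = 0 := by
      rw [setLIntegral_congr_fun_ae measurableSet_Ioi
        (ae_of_all _ (fun t (ht : s < t) => by
          rw [ENNReal.ofReal_eq_zero.2 (by linarith), zero_mul]))]
      simp
    rw [h2, add_zero]
    have h3 : ∫⁻ t in Ioc (0:ℝ) s, ENNReal.ofReal (s - t) * ENNReal.ofReal t ^ (q - 2)
        = ∫⁻ t in Ioc (0:ℝ) s, ENNReal.ofReal ((s - t) * t ^ (q - 2)) := by
      apply setLIntegral_congr_fun_ae measurableSet_Ioc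
      refine ae_of_all _ (fun t ht => ?_)
      rw [ENNReal.ofReal_rpow_of_pos ht.1,
        ← ENNReal.ofReal_mul (by linarith [ht.2] : (0:ℝ) ≤ s - t)]
    rw [h3]
    have heq : EqOn (fun t : ℝ => s * t ^ (q - 2) - t ^ (q - 1))
        (fun t : ℝ => (s - t) * t ^ (q - 2)) (Icc 0 s) := by
      intro t ht
      rcases eq_or_lt_of_le ht.1 with h0 | h0
      · simp [← h0, Real.zero_rpow hq1.ne']
      · have : t ^ (q - 1) = t ^ (q - 2) * t := by
          rw [show q - 1 = q - 2 + 1 by ring, Real.rpow_add_one h0.ne']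
        simp only [this]; ring
    have e1 : IntervalIntegrable (fun t : ℝ => t ^ (q - 2)) volume 0 s :=
      intervalIntegral.intervalIntegrable_rpow' (by linarith)
    have e2 : IntervalIntegrable (fun t : ℝ => t ^ (q - 1)) volume 0 s :=
      intervalIntegral.intervalIntegrable_rpow' (by linarith)
    have hint : IntegrableOn (fun t => (s - t) * t ^ (q - 2)) (Ioc 0 s) volume := by
      have h4 : IntervalIntegrable (fun t : ℝ => (s - t) * t ^ (q - 2)) volume 0 s := by
        apply ((e1.const_mul s).sub e2).congr_ae
        refine ae_restrict_of_forall_mem measurableSet_uIoc (fun t ht => ?_)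
        rw [Set.uIoc_of_le hs.le] at ht
        exact heq ⟨ht.1.le, ht.2⟩
      rwa [intervalIntegrable_iff_integrableOn_Ioc_of_le hs.le] at h4
    rw [← ofReal_integral_eq_lintegral_ofReal hint
      ((ae_restrict_iff' measurableSet_Ioc).2 (ae_of_all _ fun t ht => by
        have h5 : 0 ≤ s - t := by linarith [ht.2]
        have h6 : (0:ℝ) ≤ t ^ (q-2) := Real.rpow_nonneg ht.1.le _
        positivity))]
    rw [← ENNReal.ofReal_mul (by positivity)]
    congr 1
    rw [← intervalIntegral.integral_of_le hs.le,
      ← intervalIntegral.integral_congr (g := fun t : ℝ => (s - t) * t ^ (q - 2))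
        (by rwa [Set.uIcc_of_le hs.le]),
      intervalIntegral.integral_sub (e1.const_mul s) e2,
      intervalIntegral.integral_const_mul,
      integral_rpow (Or.inl (by linarith)), integral_rpow (Or.inl (by linarith))]
    have z1 : (0:ℝ) ^ (q - 2 + 1) = 0 := Real.zero_rpow (by linarith)
    have z2 : (0:ℝ) ^ (q - 1 + 1) = 0 := Real.zero_rpow (by linarith)
    have w1 : q - 2 + 1 = q - 1 := by ring
    have w2 : q - 1 + 1 = q := by ring
    rw [z1, z2, w1, w2]
    have hsq : s * s ^ (q - 1) = s ^ q := by
      rw [mul_comm, ← Real.rpow_add_one hs.ne' (q-1), w2]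
    rw [sub_zero, sub_zero, mul_div_assoc', hsq]
    field_simp
    ring

lemma ofReal_rpow' {s q : ℝ} (hs : 0 ≤ s) (hq : 0 < q) :
    ENNReal.ofReal s ^ q = ENNReal.ofReal (s ^ q) := by
  rcases eq_or_lt_of_le hs with h | h
  · rw [← h, ENNReal.ofReal_zero, ENNReal.zero_rpow_of_pos hq, Real.zero_rpow hq.ne',
      ENNReal.ofReal_zero]
  · exact ENNReal.ofReal_rpow_of_pos h

/-- Representation of the `q`-th moment via the layer-cake formula. -/
lemma rep_layercake {α : Type*} [MeasurableSpace α] {q : ℝ} (hq : 1 < q)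
    (μ : Measure α) [SFinite μ] (f : α → ℝ) (hfm : AEMeasurable f μ)
    (hf_nn : ∀ x, 0 ≤ f x) :
    ∫⁻ x, ENNReal.ofReal (f x) ^ q ∂μ =
      ENNReal.ofReal (q*(q-1)) *
        ∫⁻ t in Ioi (0:ℝ), (∫⁻ x, ENNReal.ofReal (f x - t) ∂μ) *
          ENNReal.ofReal t ^ (q - 2) := by
  have hF : AEMeasurable (fun z : α × ℝ => ENNReal.ofReal (f z.1 - z.2) *
      ENNReal.ofReal z.2 ^ (q - 2)) (μ.prod (volume.restrict (Ioi (0:ℝ)))) := by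
    exact ((hfm.comp_fst.sub measurable_snd.aemeasurable).ennreal_ofReal).mul
      ((measurable_snd.ennreal_ofReal.pow_const (q-2)).aemeasurable)
  calc ∫⁻ x, ENNReal.ofReal (f x) ^ q ∂μ
      = ∫⁻ x, ENNReal.ofReal (q*(q-1)) *
          (∫⁻ t in Ioi (0:ℝ), ENNReal.ofReal (f x - t) * ENNReal.ofReal t ^ (q - 2)) ∂μ := by
        refine lintegral_congr (fun x => ?_)
        rw [layercake_pt hq (hf_nn x), ofReal_rpow' (hf_nn x) (by linarith)]
    _ = ENNReal.ofReal (q*(q-1)) *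
          ∫⁻ x, (∫⁻ t in Ioi (0:ℝ), ENNReal.ofReal (f x - t) * ENNReal.ofReal t ^ (q - 2)) ∂μ :=
        lintegral_const_mul' _ _ ENNReal.ofReal_ne_top
    _ = ENNReal.ofReal (q*(q-1)) *
          ∫⁻ t in Ioi (0:ℝ), (∫⁻ x, ENNReal.ofReal (f x - t) * ENNReal.ofReal t ^ (q - 2) ∂μ) := by
        rw [lintegral_lintegral_swap hF]
    _ = ENNReal.ofReal (q*(q-1)) *
          ∫⁻ t in Ioi (0:ℝ), (∫⁻ x, ENNReal.ofReal (f x - t) ∂μ) *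
            ENNReal.ofReal t ^ (q - 2) := by
        congr 1
        refine setLIntegral_congr_fun_ae measurableSet_Ioi (ae_of_all _ (fun t ht => ?_))
        rw [lintegral_mul_const' _ _ (by
          rw [ENNReal.ofReal_rpow_of_pos ht]; exact ENNReal.ofReal_ne_top)]

section Key

variable {N : ℕ}

local notation "E" => EuclideanSpace ℝ (Fin N)

/-- Key lemma A: comparison of integrals of positive parts. -/
lemma keyA [Nontrivial (EuclideanSpace ℝ (Fin N))]
    (R : ℝ) (hR : 0 < R) (f g : EuclideanSpace ℝ (Fin N) → ℝ)
    (hf_int : IntegrableOn f (ball (0 : EuclideanSpace ℝ (Fin N)) R))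
    (hg_int : IntegrableOn g (ball (0 : EuclideanSpace ℝ (Fin N)) R))
    (hf_rd : ∀ x y : EuclideanSpace ℝ (Fin N), ‖x‖ ≤ ‖y‖ → f y ≤ f x)
    (hprec : ∀ r : ℝ, 0 < r → r ≤ R →
      ∫ x in ball (0 : EuclideanSpace ℝ (Fin N)) r, f x ≤
        ∫ x in ball (0 : EuclideanSpace ℝ (Fin N)) r, g x)
    (t : ℝ) :
    ∫ x in ball (0 : EuclideanSpace ℝ (Fin N)) R, max (f x - t) 0 ≤
      ∫ x in ball (0 : EuclideanSpace ℝ (Fin N)) R, max (g x - t) 0 := by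
  classical
  set A : Set ℝ := insert 0 ((fun x : E => ‖x‖) '' {x : E | ‖x‖ < R ∧ t < f x}) with hA
  have hA_ne : A.Nonempty := ⟨0, mem_insert _ _⟩
  have hA_bdd : BddAbove A := by
    refine ⟨R, ?_⟩
    rintro r (rfl | ⟨x, hx, rfl⟩)
    · exact hR.le
    · exact hx.1.le
  set ρ := sSup A with hρ
  have hρ0 : 0 ≤ ρ := le_csSup hA_bdd (mem_insert _ _)
  have hρR : ρ ≤ R := by
    refine csSup_le hA_ne ?_
    rintro r (rfl | ⟨x, hx, rfl⟩)
    · exact hR.le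
    · exact hx.1.le
  have hball : ∀ x : E, ‖x‖ < ρ → t < f x := by
    intro x hx
    obtain ⟨r, hrA, hgt⟩ := exists_lt_of_lt_csSup hA_ne hx
    rcases hrA with rfl | ⟨y, hy, rfl⟩
    · exact absurd hgt (not_lt.2 (norm_nonneg x))
    · exact lt_of_lt_of_le hy.2 (hf_rd x y hgt.le)
  have houtside : ∀ x : E, ‖x‖ < R → ρ < ‖x‖ → f x ≤ t := by
    intro x h1 h2
    by_contra h
    push_neg at h
    exact absurd (le_csSup hA_bdd (mem_insert_of_mem _ ⟨x, ⟨h1, h⟩, rfl⟩)) (not_le.2 h2)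
  have hsphere : volume (sphere (0:E) ρ) = 0 := Measure.addHaar_sphere _ _ _
  -- integrability facts
  have hvolR : volume (ball (0:E) R) < ⊤ := measure_ball_lt_top
  have hconst : ∀ r : ℝ, IntegrableOn (fun _ : E => t) (ball (0:E) r) volume :=
    fun r => integrableOn_const measure_ball_lt_top.ne
  have hf_int' : IntegrableOn (fun x => max (f x - t) 0) (ball (0:E) R) volume :=
    (hf_int.sub (hconst R)).pos_part
  have hg_int' : IntegrableOn (fun x => max (g x - t) 0) (ball (0:E) R) volume :=
    (hg_int.sub (hconst R)).pos_part
  -- step 1 : reduce to ball ρ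
  have hsub : ball (0:E) ρ ⊆ ball (0:E) R := ball_subset_ball hρR
  have step1 : ∫ x in ball (0:E) R, max (f x - t) 0 =
      ∫ x in ball (0:E) ρ, max (f x - t) 0 := by
    rw [← integral_inter_add_diff (measurableSet_closedBall (x := (0:E)) (ε := ρ)) hf_int']
    have hz : ∫ x in ball (0:E) R \ closedBall (0:E) ρ, max (f x - t) 0 = 0 := by
      apply setIntegral_eq_zero_of_forall_eq_zero
      intro x hx
      have h1 : ρ < ‖x‖ := by
        have := hx.2
        simp only [mem_closedBall, dist_zero_right, not_le] at this
        exact this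
      have h2 : ‖x‖ < R := by simpa [dist_zero_right] using hx.1
      have := houtside x h2 h1
      simp [max_eq_right, sub_nonpos.2 this]
    rw [hz, add_zero]
    apply setIntegral_congr_set
    have h1 : (ball (0:E) R ∩ closedBall (0:E) ρ) \ ball (0:E) ρ ⊆ sphere (0:E) ρ := by
      rintro x ⟨⟨_, hx2⟩, hx3⟩
      simp only [mem_closedBall, dist_zero_right] at hx2
      simp only [mem_ball, dist_zero_right, not_lt] at hx3
      simp [mem_sphere, dist_zero_right, le_antisymm hx2 hx3]
    have h2 : ball (0:E) ρ \ (ball (0:E) R ∩ closedBall (0:E) ρ) = ∅ := by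
      rw [diff_eq_empty]
      exact subset_inter hsub ball_subset_closedBall
    exact ae_eq_set.2 ⟨measure_mono_null h1 hsphere, by simp [h2]⟩
  rcases eq_or_lt_of_le hρ0 with h0 | h0
  · rw [step1, ← h0]
    rw [Metric.ball_zero]
    simp only [Measure.restrict_empty, integral_zero_measure]
    exact setIntegral_nonneg measurableSet_ball (fun x _ => le_max_right _ _)
  · have step2 : ∫ x in ball (0:E) ρ, max (f x - t) 0 =
        (∫ x in ball (0:E) ρ, f x) - t * (volume (ball (0:E) ρ)).toReal := by
      rw [setIntegral_congr_fun (g := fun x => f x - t) measurableSet_ball ?_]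
      · rw [integral_sub (hf_int.mono_set hsub) (hconst ρ), setIntegral_const]
        simp [smul_eq_mul, mul_comm, Measure.real]
      · intro x hx
        have : t < f x := hball x (by simpa [dist_zero_right] using hx)
        exact max_eq_left (by linarith)
    rw [step1, step2]
    have c1 : ∫ x in ball (0:E) ρ, f x ≤ ∫ x in ball (0:E) ρ, g x := hprec ρ h0 hρR
    calc (∫ x in ball (0:E) ρ, f x) - t * (volume (ball (0:E) ρ)).toReal
        ≤ (∫ x in ball (0:E) ρ, g x) - t * (volume (ball (0:E) ρ)).toReal := by linarith
      _ = ∫ x in ball (0:E) ρ, (g x - t) := by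
          rw [integral_sub (hg_int.mono_set hsub) (hconst ρ), setIntegral_const]
          simp [smul_eq_mul, mul_comm, Measure.real]
      _ ≤ ∫ x in ball (0:E) ρ, max (g x - t) 0 := by
          apply integral_mono ((hg_int.mono_set hsub).sub (hconst ρ))
            ((hg_int.mono_set hsub).sub (hconst ρ)).pos_part
          exact fun x => le_max_left _ _
      _ ≤ ∫ x in ball (0:E) R, max (g x - t) 0 := by
          apply setIntegral_mono_set hg_int'
            (ae_of_all _ (fun x => le_max_right _ _))
            (HasSubset.Subset.eventuallyLE hsub)


/-- keyA in lintegral form. -/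
lemma keyA_lint [Nontrivial (EuclideanSpace ℝ (Fin N))]
    (R : ℝ) (hR : 0 < R) (f g : EuclideanSpace ℝ (Fin N) → ℝ)
    (hf_int : IntegrableOn f (ball (0 : EuclideanSpace ℝ (Fin N)) R))
    (hg_int : IntegrableOn g (ball (0 : EuclideanSpace ℝ (Fin N)) R))
    (hf_rd : ∀ x y : EuclideanSpace ℝ (Fin N), ‖x‖ ≤ ‖y‖ → f y ≤ f x)
    (hprec : ∀ r : ℝ, 0 < r → r ≤ R →
      ∫ x in ball (0 : EuclideanSpace ℝ (Fin N)) r, f x ≤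
        ∫ x in ball (0 : EuclideanSpace ℝ (Fin N)) r, g x)
    (t : ℝ) :
    ∫⁻ x in ball (0 : EuclideanSpace ℝ (Fin N)) R, ENNReal.ofReal (f x - t) ≤
      ∫⁻ x in ball (0 : EuclideanSpace ℝ (Fin N)) R, ENNReal.ofReal (g x - t) := by
  have hmax : ∀ a : ℝ, ENNReal.ofReal (max a 0) = ENNReal.ofReal a := by
    intro a
    rcases le_total a 0 with h | h
    · simp [max_eq_right h, ENNReal.ofReal_eq_zero.2 h]
    · simp [max_eq_left h]
  have hconst : ∀ r : ℝ, IntegrableOn (fun _ : EuclideanSpace ℝ (Fin N) => t)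
      (ball (0 : EuclideanSpace ℝ (Fin N)) r) volume :=
    fun r => integrableOn_const measure_ball_lt_top.ne
  have hf_int' : IntegrableOn (fun x => max (f x - t) 0)
      (ball (0 : EuclideanSpace ℝ (Fin N)) R) volume := (hf_int.sub (hconst R)).pos_part
  have hg_int' : IntegrableOn (fun x => max (g x - t) 0)
      (ball (0 : EuclideanSpace ℝ (Fin N)) R) volume := (hg_int.sub (hconst R)).pos_part
  have e1 : ∫⁻ x in ball (0 : EuclideanSpace ℝ (Fin N)) R, ENNReal.ofReal (f x - t) =
      ENNReal.ofReal (∫ x in ball (0 : EuclideanSpace ℝ (Fin N)) R, max (f x - t) 0) := by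
    rw [ofReal_integral_eq_lintegral_ofReal hf_int'
      (ae_of_all _ (fun x => le_max_right _ _))]
    exact lintegral_congr (fun x => (hmax _).symm)
  have e2 : ∫⁻ x in ball (0 : EuclideanSpace ℝ (Fin N)) R, ENNReal.ofReal (g x - t) =
      ENNReal.ofReal (∫ x in ball (0 : EuclideanSpace ℝ (Fin N)) R, max (g x - t) 0) := by
    rw [ofReal_integral_eq_lintegral_ofReal hg_int'
      (ae_of_all _ (fun x => le_max_right _ _))]
    exact lintegral_congr (fun x => (hmax _).symm)
  rw [e1, e2]
  exact ENNReal.ofReal_le_ofReal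
    (keyA R hR f g hf_int hg_int hf_rd hprec t)

end Key

/-- If `f, g` are rearranged integrable functions on a ball with `f ≺ g`, then
`‖f‖_{L^p} ≤ ‖g‖_{L^p}` for every `p ∈ [1,∞]`. -/
theorem lpNorm_le_of_concentration {N : ℕ} (R : ℝ) (hR : 0 < R)
    (f g : EuclideanSpace ℝ (Fin N) → ℝ)
    (hf_int : IntegrableOn f (ball (0 : EuclideanSpace ℝ (Fin N)) R))
    (hg_int : IntegrableOn g (ball (0 : EuclideanSpace ℝ (Fin N)) R))
    (hf_nn : ∀ x, 0 ≤ f x) (hg_nn : ∀ x, 0 ≤ g x)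
    (hf_rd : ∀ x y : EuclideanSpace ℝ (Fin N), ‖x‖ ≤ ‖y‖ → f y ≤ f x)
    (hg_rd : ∀ x y : EuclideanSpace ℝ (Fin N), ‖x‖ ≤ ‖y‖ → g y ≤ g x)
    (hprec : ∀ r : ℝ, 0 < r → r ≤ R →
      ∫ x in ball (0 : EuclideanSpace ℝ (Fin N)) r, f x ≤
        ∫ x in ball (0 : EuclideanSpace ℝ (Fin N)) r, g x)
    (p : ℝ≥0∞) (hp : 1 ≤ p) :
    eLpNorm f p (volume.restrict (ball (0 : EuclideanSpace ℝ (Fin N)) R)) ≤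
      eLpNorm g p (volume.restrict (ball (0 : EuclideanSpace ℝ (Fin N)) R)) := by
  rcases Nat.eq_zero_or_pos N with hN | hN
  · -- dimension 0 : subsingleton space
    subst hN
    haveI : Subsingleton (EuclideanSpace ℝ (Fin 0)) :=
      ⟨fun a b => PiLp.ext fun i => i.elim0⟩
    have hx0 : ∀ x : EuclideanSpace ℝ (Fin 0), x = 0 := fun x => Subsingleton.elim x 0
    have hfg : f 0 ≤ g 0 := by
      have h := hprec R hR le_rfl
      have hf' : ∫ x in ball (0 : EuclideanSpace ℝ (Fin 0)) R, f x
          = (volume (ball (0 : EuclideanSpace ℝ (Fin 0)) R)).toReal * f 0 := by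
        rw [setIntegral_congr_fun measurableSet_ball
          (g := fun _ => f 0) (fun x _ => by rw [hx0 x]), setIntegral_const, smul_eq_mul, Measure.real]
      have hg' : ∫ x in ball (0 : EuclideanSpace ℝ (Fin 0)) R, g x
          = (volume (ball (0 : EuclideanSpace ℝ (Fin 0)) R)).toReal * g 0 := by
        rw [setIntegral_congr_fun measurableSet_ball
          (g := fun _ => g 0) (fun x _ => by rw [hx0 x]), setIntegral_const, smul_eq_mul, Measure.real]
      rw [hf', hg'] at h
      have hvol : 0 < (volume (ball (0 : EuclideanSpace ℝ (Fin 0)) R)).toReal :=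
        ENNReal.toReal_pos (measure_ball_pos _ _ hR).ne' measure_ball_lt_top.ne
      exact le_of_mul_le_mul_left h hvol
    apply eLpNorm_mono
    intro x
    rw [hx0 x, Real.norm_eq_abs, Real.norm_eq_abs, abs_of_nonneg (hf_nn 0),
      abs_of_nonneg (hg_nn 0)]
    exact hfg
  · haveI : Nontrivial (EuclideanSpace ℝ (Fin N)) := by
      apply Module.nontrivial_of_finrank_pos (R := ℝ)
      rw [finrank_euclideanSpace_fin]
      exact hN
    set μ' := volume.restrict (ball (0 : EuclideanSpace ℝ (Fin N)) R) with hμ'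
    rcases eq_or_ne p ⊤ with hptop | hptop
    · -- p = ∞ case
      subst hptop
      rw [eLpNorm_exponent_top, eLpNorm_exponent_top]
      by_contra hlt
      push_neg at hlt
      obtain ⟨c, hc1, hc2⟩ := exists_between hlt
      have hc_ne_top : c ≠ ⊤ := hc2.ne_top
      have hLg_ne_top : eLpNormEssSup g μ' ≠ ⊤ := hc1.ne_top
      have hrfl : eLpNormEssSup f μ' = essSup (fun x => (‖f x‖₊ : ℝ≥0∞)) μ' := rfl
      have hS : μ' {x | c < (‖f x‖₊ : ℝ≥0∞)} ≠ 0 := by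
        intro h0
        have hae : ∀ᵐ x ∂μ', (‖f x‖₊ : ℝ≥0∞) ≤ c := by
          rw [ae_iff]
          convert h0 using 2
          ext x
          simp [not_le]
        exact absurd (hrfl ▸ essSup_le_of_ae_le c hae) (not_le.2 hc2)
      rw [hμ', Measure.restrict_apply' measurableSet_ball] at hS
      have h0 : volume ({(0 : EuclideanSpace ℝ (Fin N))}) = 0 := by
        have hsub : ({(0 : EuclideanSpace ℝ (Fin N))} : Set _) ⊆
            sphere (0 : EuclideanSpace ℝ (Fin N)) 0 := by
          intro x hx; simp at hx; simp [hx]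
        exact measure_mono_null hsub (Measure.addHaar_sphere _ _ _)
      have hT : volume (({x | c < (‖f x‖₊ : ℝ≥0∞)} ∩
          ball (0 : EuclideanSpace ℝ (Fin N)) R) \ {0}) ≠ 0 := by
        rwa [measure_diff_null h0]
      obtain ⟨x₀, ⟨hx₀S, hx₀B⟩, hx₀0⟩ := nonempty_of_measure_ne_zero hT
      have hx₀0' : x₀ ≠ 0 := by simpa using hx₀0
      have hr0 : 0 < ‖x₀‖ := norm_pos_iff.2 hx₀0'
      have hrR : ‖x₀‖ < R := by simpa [dist_zero_right] using hx₀B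
      -- a.e. bound for g on the small ball
      have hgae : ∀ᵐ x ∂(volume.restrict (ball (0 : EuclideanSpace ℝ (Fin N)) ‖x₀‖)),
          g x ≤ (eLpNormEssSup g μ').toReal := by
        have h1 : ∀ᵐ x ∂μ', (‖g x‖₊ : ℝ≥0∞) ≤ eLpNormEssSup g μ' :=
          enorm_ae_le_eLpNormEssSup g μ'
        have h2 := ae_restrict_of_ae_restrict_of_subset (ball_subset_ball hrR.le)
          (hμ' ▸ h1)
        filter_upwards [h2] with x hx
        have h3 := ENNReal.toReal_mono hLg_ne_top hx
        rw [ENNReal.coe_toReal, coe_nnnorm, Real.norm_eq_abs] at h3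
        exact (le_abs_self _).trans h3
      -- lower bound for f on the small ball
      have hfx₀ : ∀ x ∈ ball (0 : EuclideanSpace ℝ (Fin N)) ‖x₀‖, f x₀ ≤ f x := by
        intro x hx
        exact hf_rd x x₀ (le_of_lt (mem_ball_zero_iff.1 hx))
      have hvol : 0 < (volume (ball (0 : EuclideanSpace ℝ (Fin N)) ‖x₀‖)).toReal :=
        ENNReal.toReal_pos (measure_ball_pos _ _ hr0).ne' measure_ball_lt_top.ne
      have hint1 : (volume (ball (0 : EuclideanSpace ℝ (Fin N)) ‖x₀‖)).toReal * f x₀ ≤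
          ∫ x in ball (0 : EuclideanSpace ℝ (Fin N)) ‖x₀‖, f x := by
        have := setIntegral_mono_on
          (integrableOn_const measure_ball_lt_top.ne)
          (hf_int.mono_set (ball_subset_ball hrR.le))
          measurableSet_ball (f := fun _ => f x₀) hfx₀
        rwa [setIntegral_const, smul_eq_mul] at this
      have hint2 : ∫ x in ball (0 : EuclideanSpace ℝ (Fin N)) ‖x₀‖, g x ≤
          (volume (ball (0 : EuclideanSpace ℝ (Fin N)) ‖x₀‖)).toReal *
            (eLpNormEssSup g μ').toReal := by
        have := integral_mono_ae (hg_int.mono_set (ball_subset_ball hrR.le))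
          (integrableOn_const measure_ball_lt_top.ne) hgae
        rwa [setIntegral_const, smul_eq_mul] at this
      have hchain := (hint1.trans (hprec _ hr0 hrR.le)).trans hint2
      have hfx₀le : f x₀ ≤ (eLpNormEssSup g μ').toReal := by
        have := (mul_le_mul_iff_right₀ hvol).1 hchain
        linarith
      -- but c < ‖f x₀‖ and Lg < c
      have hc' : c.toReal < f x₀ := by
        have hx₀S' : c < ‖f x₀‖ₑ := hx₀S
        rw [← ofReal_norm, Real.norm_eq_abs,
          abs_of_nonneg (hf_nn x₀)] at hx₀S'
        exact (ENNReal.lt_ofReal_iff_toReal_lt hc_ne_top).1 hx₀S'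
      have hgc : (eLpNormEssSup g μ').toReal < c.toReal :=
        (ENNReal.toReal_lt_toReal hLg_ne_top hc_ne_top).2 hc1
      linarith
    · -- p finite
      have hp0 : p ≠ 0 := (lt_of_lt_of_le zero_lt_one hp).ne'
      set q := p.toReal with hq
      have hq1 : 1 ≤ q := by
        rw [hq, ← ENNReal.toReal_one]
        exact ENNReal.toReal_mono hptop hp
      have hq0 : 0 < q := by linarith
      rw [eLpNorm_eq_lintegral_rpow_enorm_toReal hp0 hptop,
        eLpNorm_eq_lintegral_rpow_enorm_toReal hp0 hptop]
      apply ENNReal.rpow_le_rpow _ (by positivity)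
      have hf' : ∀ x : EuclideanSpace ℝ (Fin N),
          ‖f x‖ₑ = ENNReal.ofReal (f x) := fun x => by
        rw [← ofReal_norm, Real.norm_eq_abs, abs_of_nonneg (hf_nn x)]
      have hg' : ∀ x : EuclideanSpace ℝ (Fin N),
          ‖g x‖ₑ = ENNReal.ofReal (g x) := fun x => by
        rw [← ofReal_norm, Real.norm_eq_abs, abs_of_nonneg (hg_nn x)]
      simp_rw [hf', hg']
      rcases eq_or_lt_of_le hq1 with hq1' | hq1'
      · simp_rw [← hq, ← hq1', ENNReal.rpow_one]
        have := keyA_lint R hR f g hf_int hg_int hf_rd hprec 0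
        simpa [sub_zero] using this
      · have hfm : AEMeasurable f μ' := hf_int.aestronglyMeasurable.aemeasurable
        have hgm : AEMeasurable g μ' := hg_int.aestronglyMeasurable.aemeasurable
        simp_rw [← hq]
        rw [rep_layercake hq1' μ' f hfm hf_nn, rep_layercake hq1' μ' g hgm hg_nn]
        apply mul_le_mul_right
        apply lintegral_mono
        intro t
        exact mul_le_mul_left (keyA_lint R hR f g hf_int hg_int hf_rd hprec t) _
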